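/- For a 2×2 real matrix with entries s, -Δt·a·s, Δt·s, s (i.e., [[s, -Δt a s],[Δt s, s]]) where a ≥ 0, Δt > 0 and s = 1/(1 + Δt² a), the complex eigenvalues are s ± i Δt s √a, and their squared modulus equals s. -/

import Mathlib

open Matrix Complex

/-- For `M = [[s, -Δt a s],[Δt s, s]]` with `a ≥ 0`, `Δt > 0`,
`s = 1/(1 + Δt² a)`, the complex eigenvalues are `s ± i Δt s √a`, each of squared
modulus `s`. -/
theorem stmt2 (a Δt s : ℝ) (ha : 0 ≤ a) (hΔt : 0 < Δt) (hs : s = 1 / (1 + Δt ^ 2 * a))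
    (M : Matrix (Fin 2) (Fin 2) ℂ)
    (hM : M = !![(s : ℂ), -(Δt * a * s : ℝ); (Δt * s : ℝ), (s : ℂ)]) :
    spectrum ℂ M =
      {(s : ℂ) + Complex.I * Δt * s * Real.sqrt a, (s : ℂ) - Complex.I * Δt * s * Real.sqrt a}
    ∧ ∀ lam ∈ spectrum ℂ M, ‖lam‖ ^ 2 = s := by
  have hpos : (0:ℝ) < 1 + Δt ^ 2 * a := by positivity
  have hs1 : s * (1 + Δt ^ 2 * a) = 1 := by
    rw [hs]; field_simp
  set r : ℝ := Real.sqrt a with hr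
  have hr2 : r ^ 2 = a := Real.sq_sqrt ha
  set l1 : ℂ := (s : ℂ) + Complex.I * Δt * s * r with hl1
  set l2 : ℂ := (s : ℂ) - Complex.I * Δt * s * r with hl2
  have key : ∀ μ : ℂ, μ ∈ spectrum ℂ M ↔ (μ - l1) * (μ - l2) = 0 := by
    intro μ
    rw [spectrum.mem_iff, Matrix.isUnit_iff_isUnit_det, isUnit_iff_ne_zero, not_ne_iff]
    have : (algebraMap ℂ (Matrix (Fin 2) (Fin 2) ℂ)) μ - M
        = !![μ - s, (Δt * a * s : ℝ); -(Δt * s : ℝ), μ - s] := by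
      rw [hM]
      ext i j
      fin_cases i <;> fin_cases j <;>
        simp [Matrix.algebraMap_matrix_apply, Matrix.one_apply]
    rw [this, Matrix.det_fin_two_of]
    have hac : ((a : ℂ)) = (r : ℂ) ^ 2 := by norm_cast; rw [hr2]
    have expand : (μ - l1) * (μ - l2)
        = (μ - (s:ℂ)) * (μ - (s:ℂ)) - ((Δt * a * s : ℝ) : ℂ) * (-((Δt * s : ℝ) : ℂ)) := by
      rw [hl1, hl2]
      push_cast
      linear_combination (-(Δt:ℂ)^2 * (s:ℂ)^2 * (r:ℂ)^2) * Complex.I_sq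
        - (Δt:ℂ)^2 * (s:ℂ)^2 * hac
    rw [expand]
  have e1 : ‖l1‖ ^ 2 = s := by
    have : l1 = (s : ℂ) + ((Δt * s * r : ℝ) : ℂ) * Complex.I := by
      rw [hl1]; push_cast; ring
    rw [this, Complex.sq_norm, Complex.normSq_add_mul_I]
    linear_combination s * hs1 + Δt ^ 2 * s ^ 2 * hr2
  have e2 : ‖l2‖ ^ 2 = s := by
    have : l2 = (s : ℂ) + ((-(Δt * s * r) : ℝ) : ℂ) * Complex.I := by
      rw [hl2]; push_cast; ring
    rw [this, Complex.sq_norm, Complex.normSq_add_mul_I]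
    linear_combination s * hs1 + Δt ^ 2 * s ^ 2 * hr2
  constructor
  · ext μ
    rw [key μ, mul_eq_zero, sub_eq_zero, sub_eq_zero]
    simp [hl1, hl2, Set.mem_insert_iff]
  · intro lam hlam
    rcases mul_eq_zero.mp ((key lam).mp hlam) with h | h <;> rw [sub_eq_zero] at h <;> rw [h]
    · exact e1
    · exact e2
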